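/- For every positive integer n and every real number u with |u| > 1, the series Σ_{k=0}^∞ u^{−k} d_k(n) converges and equals (u/(u−1)) · Σ_{k=0}^{⌊log₂ n⌋} (u−1)^{−k} f_k(n), where d_k(n) = f_k(n,1) and f_k(n) = f_k(n,2). -/

import Mathlib

open Finset

/-- `f k n l` is the number of ordered `k`-tuples `(i₁, …, i_k)` of integers
with each `i_j ≥ l` and `i₁ ⋯ i_k = n`.  (For `n ≥ 1` and `l ≥ 1` every such
factor lies in `[l, n]`, and for `k = 0` this gives `1` if `n = 1` and `0` otherwise.) -/
def f (k n l : ℕ) : ℕ :=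
  ((Fintype.piFinset fun _ : Fin k => Finset.Icc l n).filter
    fun v => ∏ i, v i = n).card

/-- `F k x l = ∑_{n ≤ x} f k n l`; it equals `0` for `x < 1` and `F 0 x l = 1` for `x ≥ 1`. -/
noncomputable def F (k : ℕ) (x : ℝ) (l : ℕ) : ℕ :=
  ∑ n ∈ Finset.Icc 1 ⌊x⌋₊, f k n l

lemma f_zero (n l : ℕ) : f 0 n l = if n = 1 then 1 else 0 := by
  rcases eq_or_ne n 1 with h | h <;> simp [f, eq_comm, h]

lemma f_succ (k n l : ℕ) (hl : 1 ≤ l) (hn : 0 < n) :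
    f (k+1) n l = ∑ d ∈ n.divisors.filter (l ≤ ·), f k (n/d) l := by
  unfold f
  rw [← Finset.card_sigma]
  refine Finset.card_bij' (fun v _ => (⟨v 0, Fin.tail v⟩ : Σ _ : ℕ, (Fin k → ℕ)))
    (fun p _ => Fin.cons p.1 p.2) ?hi ?hj ?li ?ri
  case hi =>
    rintro v hv
    simp only [Finset.mem_filter, Fintype.mem_piFinset, Finset.mem_Icc] at hv
    obtain ⟨hmem, hprod⟩ := hv
    rw [Fin.prod_univ_succ] at hprod
    have hd : v 0 ∣ n := ⟨_, hprod.symm⟩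
    have hdpos : 0 < v 0 := le_trans hl (hmem 0).1
    have hq : ∏ i, Fin.tail v i = n / v 0 := by
      rw [← hprod, Nat.mul_div_cancel_left _ hdpos]; rfl
    have hqpos : 0 < n / v 0 := Nat.div_pos (Nat.le_of_dvd hn hd) hdpos
    simp only [Finset.mem_sigma, Finset.mem_filter, Nat.mem_divisors,
      Fintype.mem_piFinset, Finset.mem_Icc]
    refine ⟨⟨⟨hd, hn.ne'⟩, (hmem 0).1⟩, fun i => ⟨(hmem i.succ).1, ?_⟩, hq⟩
    exact Nat.le_of_dvd hqpos ((Finset.dvd_prod_of_mem _ (Finset.mem_univ i)).trans hq.dvd)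
  case hj =>
    rintro ⟨d, w⟩ hp
    simp only [Finset.mem_sigma, Finset.mem_filter, Nat.mem_divisors,
      Fintype.mem_piFinset, Finset.mem_Icc] at hp
    obtain ⟨⟨⟨hdvd, _⟩, hld⟩, hw, hprod⟩ := hp
    simp only [Finset.mem_filter, Fintype.mem_piFinset, Finset.mem_Icc]
    constructor
    · intro i
      refine Fin.cases ⟨hld, Nat.le_of_dvd hn hdvd⟩ (fun j => ⟨(hw j).1, ?_⟩) i
      exact le_trans (hw j).2 (Nat.div_le_self n d)
    · rw [Fin.prod_univ_succ]
      simp only [Fin.cons_zero, Fin.cons_succ]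
      rw [show (∏ i : Fin k, w i) = n / d from hprod, Nat.mul_div_cancel' hdvd]
  case li => intro v _; exact Fin.cons_self_tail v
  case ri => rintro ⟨d, w⟩ _; simp [Fin.tail_cons]

lemma f_two_zero {j n : ℕ} (h : n < 2 ^ j) : f j n 2 = 0 := by
  rw [f, Finset.card_eq_zero, Finset.filter_eq_empty_iff]
  intro v hv
  simp only [Fintype.mem_piFinset, Finset.mem_Icc] at hv
  intro hprod
  have : 2 ^ j ≤ n := by
    calc 2 ^ j = ∏ _i : Fin j, 2 := by simp
    _ ≤ ∏ i, v i := Finset.prod_le_prod' fun i _ => (hv i).1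
    _ = n := hprod
  omega

lemma divisors_erase (n : ℕ) (hn : 0 < n) :
    n.divisors.erase 1 = n.divisors.filter (2 ≤ ·) := by
  ext d
  simp only [Finset.mem_erase, Finset.mem_filter, Nat.mem_divisors]
  constructor
  · rintro ⟨h1, hd, hn'⟩
    exact ⟨⟨hd, hn'⟩, by have := Nat.pos_of_dvd_of_pos hd hn; omega⟩
  · rintro ⟨⟨hd, hn'⟩, h2⟩
    exact ⟨by omega, hd, hn'⟩

lemma f_one_eq (k : ℕ) : ∀ n, 0 < n →
    f k n 1 = ∑ j ∈ Finset.range (k+1), k.choose j * f j n 2 := by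
  induction k with
  | zero => intro n hn; simp [f_zero]
  | succ k ih =>
    intro n hn
    have hfilter : n.divisors.filter (1 ≤ ·) = n.divisors :=
      Finset.filter_true_of_mem fun d hd => Nat.pos_of_mem_divisors hd
    have h1 : (1:ℕ) ∈ n.divisors := Nat.one_mem_divisors.2 hn.ne'
    rw [f_succ k n 1 le_rfl hn, hfilter, ← Finset.add_sum_erase _ _ h1,
      divisors_erase n hn, Nat.div_one]
    have hstep : ∀ d ∈ n.divisors.filter (2 ≤ ·),
        f k (n/d) 1 = ∑ j ∈ Finset.range (k+1), k.choose j * f j (n/d) 2 := by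
      intro d hd
      simp only [Finset.mem_filter, Nat.mem_divisors] at hd
      exact ih _ (Nat.div_pos (Nat.le_of_dvd hn hd.1.1)
        (Nat.pos_of_dvd_of_pos hd.1.1 hn))
    rw [Finset.sum_congr rfl hstep, Finset.sum_comm, ih n hn]
    have hswap : ∀ j ∈ Finset.range (k+1),
        ∑ d ∈ n.divisors.filter (2 ≤ ·), k.choose j * f j (n/d) 2
          = k.choose j * f (j+1) n 2 := by
      intro j _
      rw [← Finset.mul_sum, ← f_succ j n 2 (by norm_num) hn]
    rw [Finset.sum_congr rfl hswap]
    -- now: ∑ j ∈ range (k+1), C(k,j) f j + ∑ j ∈ range (k+1), C(k,j) f (j+1)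
    --    = ∑ j ∈ range (k+2), C(k+1,j) f j
    set A := ∑ j ∈ Finset.range (k+1), k.choose j * f j n 2 with hA
    set B := ∑ j ∈ Finset.range (k+1), k.choose j * f (j+1) n 2 with hB
    set C := ∑ j ∈ Finset.range (k+1), k.choose (j+1) * f (j+1) n 2 with hC
    have e1 : ∑ j ∈ Finset.range (k+2), (k+1).choose j * f j n 2 = (B + C) + f 0 n 2 := by
      rw [Finset.sum_range_succ']
      simp [Nat.choose_succ_succ, add_mul, Finset.sum_add_distrib, hB, hC]
    have e2 : ∑ j ∈ Finset.range (k+2), k.choose j * f j n 2 = C + f 0 n 2 := by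
      rw [Finset.sum_range_succ']; simp [hC]
    have e3 : ∑ j ∈ Finset.range (k+2), k.choose j * f j n 2 = A := by
      rw [Finset.sum_range_succ]; simp [Nat.choose_eq_zero_of_lt, hA]
    have e0 : (∑ j ∈ Finset.range (k+1+1), (k+1).choose j * f j n 2)
        = ∑ j ∈ Finset.range (k+2), (k+1).choose j * f j n 2 := rfl
    omega

lemma hasSum_choose_pow (j : ℕ) {x : ℝ} (hx : |x| < 1) :
    HasSum (fun k : ℕ => (k.choose j : ℝ) * x ^ k) (x ^ j / (1 - x) ^ (j+1)) := by
  have h1 := hasSum_choose_mul_geometric_of_norm_lt_one j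
    (show ‖x‖ < 1 by rwa [Real.norm_eq_abs])
  have h2 : HasSum (fun m : ℕ => (((m + j).choose j : ℝ)) * x ^ (m + j))
      (x ^ j * (1 / (1 - x) ^ (j+1))) := by
    simpa [pow_add, mul_comm, mul_assoc, mul_left_comm] using h1.mul_left (x ^ j)
  have h3 := (hasSum_nat_add_iff (f := fun k : ℕ => (k.choose j : ℝ) * x ^ k) j).1 h2
  have h4 : ∑ i ∈ Finset.range j, ((i.choose j : ℝ)) * x ^ i = 0 := by
    apply Finset.sum_eq_zero
    intro i hi
    rw [Nat.choose_eq_zero_of_lt (Finset.mem_range.1 hi)]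
    simp
  rw [h4, add_zero] at h3
  simpa [mul_one_div, div_eq_mul_inv] using h3

theorem stmt17 (n : ℕ) (hn : 0 < n) (u : ℝ) (hu : 1 < |u|) :
    HasSum (fun k : ℕ => u ^ (-(k : ℤ)) * (f k n 1 : ℝ))
      (u / (u - 1) *
        ∑ k ∈ Finset.range (Nat.log 2 n + 1),
          (u - 1) ^ (-(k : ℤ)) * (f k n 2 : ℝ)) := by
  have hu0 : u ≠ 0 := by
    intro h; rw [h] at hu; simp at hu; linarith
  have hu1 : u - 1 ≠ 0 := by
    intro h
    have : u = 1 := by linarith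
    rw [this] at hu; norm_num at hu
  have hupos : (0:ℝ) < |u| := lt_trans one_pos hu
  have hx : |1/u| < 1 := by
    rw [one_div, abs_inv, inv_lt_one_iff₀]; right; exact hu
  set L := Nat.log 2 n with hL
  have key : ∀ k : ℕ, (f k n 1 : ℝ)
      = ∑ j ∈ Finset.range (L+1), (k.choose j : ℝ) * (f j n 2 : ℝ) := by
    intro k
    have e1 : ∑ j ∈ Finset.range (k+1), k.choose j * f j n 2
        = ∑ j ∈ Finset.range (k+L+2), k.choose j * f j n 2 := by
      apply Finset.sum_subset (Finset.range_subset_range.2 (by omega))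
      intro j _ hj
      rw [Nat.choose_eq_zero_of_lt (by simp at hj ⊢; omega), zero_mul]
    have e2 : ∑ j ∈ Finset.range (L+1), k.choose j * f j n 2
        = ∑ j ∈ Finset.range (k+L+2), k.choose j * f j n 2 := by
      apply Finset.sum_subset (Finset.range_subset_range.2 (by omega))
      intro j _ hj
      simp only [Finset.mem_range, not_lt] at hj
      have hnj : n < 2 ^ j :=
        lt_of_lt_of_le (Nat.lt_pow_succ_log_self (by norm_num) n)
          (Nat.pow_le_pow_right (by norm_num) (by omega))
      rw [f_two_zero hnj, mul_zero]
    have := (f_one_eq k n hn).trans (e1.trans e2.symm)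
    exact_mod_cast congrArg (Nat.cast : ℕ → ℝ) this
  have hterm : ∀ k : ℕ, u ^ (-(k:ℤ)) * (f k n 1 : ℝ)
      = ∑ j ∈ Finset.range (L+1), (f j n 2 : ℝ) * ((k.choose j : ℝ) * (1/u)^k) := by
    intro k
    have hz : u ^ (-(k:ℤ)) = (1/u)^k := by
      rw [zpow_neg, zpow_natCast, one_div, inv_pow]
    rw [key k, hz, Finset.mul_sum]
    exact Finset.sum_congr rfl fun j _ => by ring
  have hsum : HasSum
      (fun k : ℕ => ∑ j ∈ Finset.range (L+1), (f j n 2 : ℝ) * ((k.choose j : ℝ) * (1/u)^k))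
      (∑ j ∈ Finset.range (L+1), (f j n 2 : ℝ) * ((1/u)^j / (1 - 1/u)^(j+1))) :=
    hasSum_sum fun j _ => (hasSum_choose_pow j hx).mul_left _
  have hval : ∑ j ∈ Finset.range (L+1), (f j n 2 : ℝ) * ((1/u)^j / (1 - 1/u)^(j+1))
      = u / (u - 1) * ∑ k ∈ Finset.range (L+1), (u - 1) ^ (-(k:ℤ)) * (f k n 2 : ℝ) := by
    rw [Finset.mul_sum]
    refine Finset.sum_congr rfl fun j _ => ?_
    rw [zpow_neg, zpow_natCast]
    have h1u : (1 : ℝ) - 1/u = (u-1)/u := by field_simp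
    rw [h1u, div_pow]
    field_simp
    rw [div_pow]
    field_simp
    ring
  rw [show (fun k : ℕ => u ^ (-(k:ℤ)) * (f k n 1 : ℝ)) = _ from funext hterm, ← hval]
  exact hsum
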